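/- Let A, M be real J×N matrices, Γ a symmetric positive definite J×J matrix, and B₀ a symmetric positive definite N×N matrix. Define B_{ℓ+1} = R(B_ℓ) with R(B) = Aᵀ(Γ + MB⁻¹Mᵀ)⁻¹A + B₀, starting from B₀. Then the sequence {B_ℓ} is non-decreasing in the Loewner order and there exists a symmetric positive definite matrix B such that B_ℓ → B entrywise as ℓ → ∞. Consequently, the covariance matrices C_ℓ = B_ℓ⁻¹ form a non-increasing sequence in the Loewner order converging entrywise to C = B⁻¹. -/

import Mathlib

open Matrix Filter

set_option maxHeartbeats 1000000

section Helpers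
variable {n m : Type*} [Fintype n] [Fintype m] [DecidableEq n] [DecidableEq m]
set_option linter.unusedSectionVars false
set_option maxHeartbeats 1000000
variable {n m : Type*} [Fintype n] [Fintype m] [DecidableEq n] [DecidableEq m]

lemma psd_conj {X : Matrix n n ℝ} (hX : X.PosSemidef) (A : Matrix m n ℝ) :
    (A * X * Aᵀ).PosSemidef := by
  have := hX.mul_mul_conjTranspose_same A
  rwa [conjTranspose_eq_transpose_of_trivial] at this

lemma psd_conj' {X : Matrix n n ℝ} (hX : X.PosSemidef) (A : Matrix n m ℝ) :
    (Aᵀ * X * A).PosSemidef := by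
  simpa using psd_conj hX Aᵀ

lemma psd_symm {X : Matrix n n ℝ} (hX : X.PosSemidef) : Xᵀ = X := by
  have := hX.isHermitian
  rwa [Matrix.IsHermitian, conjTranspose_eq_transpose_of_trivial] at this

lemma pd_symm {X : Matrix n n ℝ} (hX : X.PosDef) : Xᵀ = X := psd_symm hX.posSemidef

lemma inv_antitone {S T : Matrix n n ℝ} (hS : S.PosDef) (hT : T.PosDef)
    (h : (S - T).PosSemidef) : (T⁻¹ - S⁻¹).PosSemidef := by
  have iS : Invertible S := S.invertibleOfIsUnitDet hS.det_pos.ne'.isUnit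
  have iT : Invertible T := T.invertibleOfIsUnitDet hT.det_pos.ne'.isUnit
  have key : T⁻¹ - S⁻¹ = S⁻¹ * ((S - T) + (S - T) * T⁻¹ * (S - T)) * S⁻¹ := by
    rw [← invOf_eq_nonsing_inv S, ← invOf_eq_nonsing_inv T]
    simp [sub_mul, mul_sub, mul_add, add_mul, mul_assoc, invOf_mul_cancel_left,
      mul_invOf_cancel_left]
  rw [key]
  have hD : ((S - T) + (S - T) * T⁻¹ * (S - T)).PosSemidef := by
    refine h.add ?_
    have := psd_conj hT.inv.posSemidef (S - T)
    rwa [psd_symm h] at this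
  have := psd_conj hD (S⁻¹)
  rwa [pd_symm hS.inv] at this

lemma quad_single {C : Matrix n n ℝ} (hC : Cᵀ = C) (i j : n) :
    ((Pi.single i 1 + Pi.single j 1) ⬝ᵥ (C *ᵥ (Pi.single i 1 + Pi.single j 1))
      - Pi.single i 1 ⬝ᵥ (C *ᵥ Pi.single i 1)
      - Pi.single j 1 ⬝ᵥ (C *ᵥ Pi.single j 1)) / 2 = C i j := by
  have hji : C j i = C i j := by
    calc C j i = Cᵀ i j := rfl
    _ = C i j := by rw [hC]
  simp [dotProduct_add, mulVec_add, mulVec_single, single_dotProduct, hji]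
  ring

end Helpers

/-- The precision iterates `B₀, B_{ℓ+1} = R(B_ℓ) = Aᵀ(Γ + M B_ℓ⁻¹ Mᵀ)⁻¹A + B₀`. -/
noncomputable def Bseq {N J : ℕ}
    (A M : Matrix (Fin J) (Fin N) ℝ) (Γ : Matrix (Fin J) (Fin J) ℝ)
    (B₀ : Matrix (Fin N) (Fin N) ℝ) : ℕ → Matrix (Fin N) (Fin N) ℝ
  | 0 => B₀
  | (ℓ + 1) => Aᵀ * (Γ + M * (Bseq A M Γ B₀ ℓ)⁻¹ * Mᵀ)⁻¹ * A + B₀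

/-- The precision iterates are non-decreasing in the Loewner order and converge entrywise to a
symmetric positive definite matrix `B`; consequently the covariances `C_ℓ = B_ℓ⁻¹` are
non-increasing in the Loewner order and converge entrywise to `C = B⁻¹`. -/
theorem stmt_13 {N J : ℕ}
    (A M : Matrix (Fin J) (Fin N) ℝ) (Γ : Matrix (Fin J) (Fin J) ℝ)
    (B₀ : Matrix (Fin N) (Fin N) ℝ)
    (hΓ : Γ.PosDef) (hB₀ : B₀.PosDef) :
    (∀ ℓ : ℕ, (Bseq A M Γ B₀ (ℓ + 1) - Bseq A M Γ B₀ ℓ).PosSemidef) ∧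
      ∃ B : Matrix (Fin N) (Fin N) ℝ, B.PosDef ∧
        (∀ i j, Tendsto (fun ℓ => Bseq A M Γ B₀ ℓ i j) atTop (nhds (B i j))) ∧
        (∀ ℓ : ℕ, ((Bseq A M Γ B₀ ℓ)⁻¹ - (Bseq A M Γ B₀ (ℓ + 1))⁻¹).PosSemidef) ∧
        (∀ i j, Tendsto (fun ℓ => (Bseq A M Γ B₀ ℓ)⁻¹ i j) atTop (nhds (B⁻¹ i j))) := by
  set Bs := Bseq A M Γ B₀ with hBsdef
  have hBsucc : ∀ ℓ, Bs (ℓ+1) = Aᵀ * (Γ + M * (Bs ℓ)⁻¹ * Mᵀ)⁻¹ * A + B₀ := fun ℓ => rfl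
  -- the matrix Γ + M C⁻¹ Mᵀ is positive definite whenever C is
  have hP : ∀ (C : Matrix (Fin N) (Fin N) ℝ), C.PosDef → (Γ + M * C⁻¹ * Mᵀ).PosDef :=
    fun C hC => hΓ.add_posSemidef (psd_conj hC.inv.posSemidef M)
  -- all iterates are positive definite
  have hPD : ∀ ℓ, (Bs ℓ).PosDef := by
    intro ℓ; induction ℓ with
    | zero => exact hB₀
    | succ ℓ ih =>
      rw [hBsucc]
      exact Matrix.PosDef.posSemidef_add (psd_conj' (hP _ ih).inv.posSemidef A) hB₀
  -- the map R is Loewner-monotone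
  have key : ∀ (C D : Matrix (Fin N) (Fin N) ℝ), C.PosDef → D.PosDef → (D - C).PosSemidef →
      ((Aᵀ * (Γ + M * D⁻¹ * Mᵀ)⁻¹ * A + B₀) - (Aᵀ * (Γ + M * C⁻¹ * Mᵀ)⁻¹ * A + B₀)).PosSemidef :=
    by
    intro C D hC hD hDC
    have h1 : (C⁻¹ - D⁻¹).PosSemidef := inv_antitone hD hC hDC
    have h2 : ((Γ + M * C⁻¹ * Mᵀ) - (Γ + M * D⁻¹ * Mᵀ)).PosSemidef := by
      have := psd_conj h1 M
      have he : (Γ + M * C⁻¹ * Mᵀ) - (Γ + M * D⁻¹ * Mᵀ) = M * (C⁻¹ - D⁻¹) * Mᵀ := by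
        rw [Matrix.mul_sub, Matrix.sub_mul]; abel
      rwa [he]
    have h3 : ((Γ + M * D⁻¹ * Mᵀ)⁻¹ - (Γ + M * C⁻¹ * Mᵀ)⁻¹).PosSemidef :=
      inv_antitone (hP C hC) (hP D hD) h2
    have := psd_conj' h3 A
    have he : (Aᵀ * (Γ + M * D⁻¹ * Mᵀ)⁻¹ * A + B₀) - (Aᵀ * (Γ + M * C⁻¹ * Mᵀ)⁻¹ * A + B₀)
        = Aᵀ * ((Γ + M * D⁻¹ * Mᵀ)⁻¹ - (Γ + M * C⁻¹ * Mᵀ)⁻¹) * A := by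
      rw [Matrix.mul_sub, Matrix.sub_mul]; abel
    rwa [he]
  -- monotonicity
  have hmono : ∀ ℓ, (Bs (ℓ+1) - Bs ℓ).PosSemidef := by
    intro ℓ; induction ℓ with
    | zero =>
      have : Bs 1 - Bs 0 = Aᵀ * (Γ + M * (Bs 0)⁻¹ * Mᵀ)⁻¹ * A := by
        rw [hBsucc]; show _ + B₀ - B₀ = _; noncomm_ring
      rw [this]
      exact psd_conj' (hP _ (hPD 0)).inv.posSemidef A
    | succ ℓ ih =>
      rw [hBsucc (ℓ+1), hBsucc ℓ]
      exact key _ _ (hPD ℓ) (hPD (ℓ+1)) ih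
  -- uniform upper bound
  set U : Matrix (Fin N) (Fin N) ℝ := Aᵀ * Γ⁻¹ * A + B₀ with hU
  have hub : ∀ ℓ, (U - Bs ℓ).PosSemidef := by
    intro ℓ
    match ℓ with
    | 0 =>
      have : U - Bs 0 = Aᵀ * Γ⁻¹ * A := by show _ + B₀ - B₀ = _; noncomm_ring
      rw [this]; exact psd_conj' hΓ.inv.posSemidef A
    | (ℓ+1) =>
      have h1 : ((Γ + M * (Bs ℓ)⁻¹ * Mᵀ) - Γ).PosSemidef := by
        have := psd_conj (hPD ℓ).inv.posSemidef M
        have he : (Γ + M * (Bs ℓ)⁻¹ * Mᵀ) - Γ = M * (Bs ℓ)⁻¹ * Mᵀ := by noncomm_ring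
        rwa [he]
      have h2 := inv_antitone (hP _ (hPD ℓ)) hΓ h1
      have := psd_conj' h2 A
      have he : U - Bs (ℓ+1) = Aᵀ * (Γ⁻¹ - (Γ + M * (Bs ℓ)⁻¹ * Mᵀ)⁻¹) * A := by
        rw [hBsucc, hU, Matrix.mul_sub, Matrix.sub_mul]; abel
      rwa [he]
  -- convergence of quadratic forms
  have hqmono : ∀ x : Fin N → ℝ, Monotone (fun ℓ => x ⬝ᵥ (Bs ℓ *ᵥ x)) := by
    intro x
    apply monotone_nat_of_le_succ
    intro ℓ
    have := (hmono ℓ).dotProduct_mulVec_nonneg x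
    simp only [star_trivial, sub_mulVec, dotProduct_sub] at this
    linarith
  have hqbdd : ∀ x : Fin N → ℝ, BddAbove (Set.range fun ℓ => x ⬝ᵥ (Bs ℓ *ᵥ x)) := by
    intro x
    refine ⟨x ⬝ᵥ (U *ᵥ x), ?_⟩
    rintro _ ⟨ℓ, rfl⟩
    have := (hub ℓ).dotProduct_mulVec_nonneg x
    simp only [star_trivial, sub_mulVec, dotProduct_sub] at this
    linarith
  have hconv : ∀ x : Fin N → ℝ, ∃ l : ℝ, Tendsto (fun ℓ => x ⬝ᵥ (Bs ℓ *ᵥ x)) atTop (nhds l) :=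
    fun x => ⟨_, tendsto_atTop_ciSup (hqmono x) (hqbdd x)⟩
  choose L hL using hconv
  -- definition of the limit matrix via polarization
  set B : Matrix (Fin N) (Fin N) ℝ := fun i j =>
    (L (Pi.single i 1 + Pi.single j 1) - L (Pi.single i 1) - L (Pi.single j 1)) / 2 with hBdef
  have hsym : ∀ ℓ, (Bs ℓ)ᵀ = Bs ℓ := fun ℓ => pd_symm (hPD ℓ)
  have hent : ∀ i j, Tendsto (fun ℓ => Bs ℓ i j) atTop (nhds (B i j)) := by
    intro i j
    have h1 := ((hL (Pi.single i 1 + Pi.single j 1)).sub (hL (Pi.single i 1))).sub (hL (Pi.single j 1))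
    have h2 := h1.div_const 2
    have he : (fun ℓ => ((Pi.single i 1 + Pi.single j 1) ⬝ᵥ (Bs ℓ *ᵥ (Pi.single i 1 + Pi.single j 1))
        - Pi.single i 1 ⬝ᵥ (Bs ℓ *ᵥ Pi.single i 1)
        - Pi.single j 1 ⬝ᵥ (Bs ℓ *ᵥ Pi.single j 1)) / 2) = fun ℓ => Bs ℓ i j := by
      funext ℓ; exact quad_single (hsym ℓ) i j
    rwa [he] at h2
  -- convergence in the matrix space
  have hBtend : Tendsto (fun ℓ => Bs ℓ) atTop (nhds B) := by
    refine tendsto_pi_nhds.mpr ?_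
    intro i
    rw [tendsto_pi_nhds]
    intro j
    exact hent i j
  -- quadratic forms of the limit
  have hqlim : ∀ x : Fin N → ℝ, Tendsto (fun ℓ => x ⬝ᵥ (Bs ℓ *ᵥ x)) atTop (nhds (x ⬝ᵥ (B *ᵥ x))) := by
    intro x
    have hc : Continuous fun C : Matrix (Fin N) (Fin N) ℝ => x ⬝ᵥ (C *ᵥ x) :=
      (continuous_const.dotProduct (continuous_id.matrix_mulVec continuous_const))
    exact (hc.continuousAt).tendsto.comp hBtend
  -- B - B₀ is positive semidefinite
  have hBsymm : Bᵀ = B := by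
    funext i j
    show B j i = B i j
    rw [hBdef]
    simp only
    rw [add_comm (Pi.single j 1)]
    ring
  have hBmB0 : (B - B₀).PosSemidef := by
    refine posSemidef_iff_dotProduct_mulVec.mpr ⟨?_, ?_⟩
    · rw [Matrix.IsHermitian, conjTranspose_eq_transpose_of_trivial, transpose_sub, hBsymm,
        pd_symm hB₀]
    · intro x
      simp only [star_trivial, sub_mulVec, dotProduct_sub, sub_nonneg]
      have h0 : ∀ ℓ, x ⬝ᵥ (B₀ *ᵥ x) ≤ x ⬝ᵥ (Bs ℓ *ᵥ x) := fun ℓ => hqmono x (Nat.zero_le ℓ)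
      exact ge_of_tendsto (hqlim x) (Eventually.of_forall h0)
  have hBPD : B.PosDef := by
    have : B = B₀ + (B - B₀) := by noncomm_ring
    rw [this]
    exact hB₀.add_posSemidef hBmB0
  refine ⟨hmono, B, hBPD, hent, ?_, ?_⟩
  · intro ℓ
    exact inv_antitone (hPD (ℓ+1)) (hPD ℓ) (hmono ℓ)
  · have hcAt : ContinuousAt Ring.inverse (B.det) := by
      rw [Ring.inverse_eq_inv']
      exact continuousAt_inv₀ hBPD.det_pos.ne'
    have hinvt : Tendsto (fun ℓ => (Bs ℓ)⁻¹) atTop (nhds B⁻¹) :=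
      ((continuousAt_matrix_inv B hcAt).tendsto).comp hBtend
    intro i j
    have h1 := tendsto_pi_nhds.mp hinvt i
    exact tendsto_pi_nhds.mp h1 j
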